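/- Every flat 𝔞-adic system admits a free resolution: if {M_k} is an 𝔞-adic system in which each M_k is a flat A_k-module, then there exist free A_k-module resolutions of the M_k with common basis sets, compatible under the reduction maps A_{k+1} → A_k. -/

import Mathlib

set_option maxHeartbeats 1000000


/-- The canonical `A`-linear reduction map `A/𝔞^{k+2} → A/𝔞^{k+1}`. -/
def quotPowRed {A : Type*} [CommRing A] (a : Ideal A) (k : ℕ) :
    (A ⧸ a ^ (k + 2)) →ₗ[A] (A ⧸ a ^ (k + 1)) :=
  Submodule.mapQ _ _ LinearMap.id (by
    rw [Submodule.comap_id]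
    exact Ideal.pow_le_pow_right (Nat.le_succ _))


open LinearMap TensorProduct

universe u v

variable {R : Type u} [CommRing R]

/-- If `K → F → M` is exact with `F → M` surjective, `K → F` injective and `M` flat,
then `N ⊗ K → N ⊗ F` is injective for every `N`. -/
theorem lTensor_injective_of_flat
    {K F M : Type v} [AddCommGroup K] [Module R K] [AddCommGroup F] [Module R F]
    [AddCommGroup M] [Module R M] [Module.Flat R M]
    {i : K →ₗ[R] F} {f : F →ₗ[R] M}
    (hi : Function.Injective i) (hf : Function.Surjective f)
    (hexact : Function.Exact i f)
    {N F0 : Type*} [AddCommGroup N] [Module R N] [AddCommGroup F0] [Module R F0]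
    [Module.Flat R F0] (p : F0 →ₗ[R] N) (hpsurj : Function.Surjective p) :
    Function.Injective (i.lTensor N) := by
  rw [injective_iff_map_eq_zero]
  intro x hx
  set P := LinearMap.ker p with hP
  set j : P →ₗ[R] F0 := P.subtype with hj
  have hpj : Function.Exact j p := LinearMap.exact_subtype_ker_map p
  -- lift x
  obtain ⟨u, hu⟩ : ∃ u, p.rTensor K u = x := LinearMap.rTensor_surjective K hpsurj x
  set y : F0 ⊗[R] F := i.lTensor F0 u with hy
  have hy0 : p.rTensor F y = 0 := by
    have h1 : (p.rTensor F).comp (i.lTensor F0) = (i.lTensor N).comp (p.rTensor K) := by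
      rw [rTensor_comp_lTensor, lTensor_comp_rTensor]
    calc p.rTensor F y = ((p.rTensor F).comp (i.lTensor F0)) u := rfl
    _ = ((i.lTensor N).comp (p.rTensor K)) u := by rw [h1]
    _ = i.lTensor N x := by rw [LinearMap.comp_apply, hu]
    _ = 0 := hx
  obtain ⟨y', hy'⟩ : y ∈ Set.range (j.rTensor F) :=
    (rTensor_exact F hpj hpsurj y).mp hy0
  have hz : f.lTensor P y' = 0 := by
    have hinj : Function.Injective (j.rTensor M) :=
      Module.Flat.rTensor_preserves_injective_linearMap j (Submodule.injective_subtype P)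
    apply hinj
    rw [map_zero]
    have h1 : (j.rTensor M).comp (f.lTensor P) = (f.lTensor F0).comp (j.rTensor F) := by
      rw [rTensor_comp_lTensor, lTensor_comp_rTensor]
    calc j.rTensor M (f.lTensor P y') = ((j.rTensor M).comp (f.lTensor P)) y' := rfl
    _ = ((f.lTensor F0).comp (j.rTensor F)) y' := by rw [h1]
    _ = f.lTensor F0 y := by rw [LinearMap.comp_apply, hy']
    _ = ((f.lTensor F0).comp (i.lTensor F0)) u := by rw [hy]; rfl
    _ = (f.comp i).lTensor F0 u := by rw [lTensor_comp]
    _ = 0 := by rw [hexact.linearMap_comp_eq_zero, lTensor_zero]; rfl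
  obtain ⟨w, hw⟩ : y' ∈ Set.range (i.lTensor P) :=
    (_root_.lTensor_exact P hexact hf y').mp hz
  have hu' : i.lTensor F0 (j.rTensor K w) = i.lTensor F0 u := by
    have h1 : (i.lTensor F0).comp (j.rTensor K) = (j.rTensor F).comp (i.lTensor P) := by
      rw [rTensor_comp_lTensor, lTensor_comp_rTensor]
    calc i.lTensor F0 (j.rTensor K w)
        = ((i.lTensor F0).comp (j.rTensor K)) w := rfl
    _ = ((j.rTensor F).comp (i.lTensor P)) w := by rw [h1]
    _ = j.rTensor F y' := by rw [LinearMap.comp_apply, hw]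
    _ = i.lTensor F0 u := by rw [hy']
  have huu : j.rTensor K w = u :=
    Module.Flat.lTensor_preserves_injective_linearMap i hi hu'
  have : x = (p.comp j).rTensor K w := by
    rw [rTensor_comp, LinearMap.comp_apply, huu, hu]
  rw [this, hpj.linearMap_comp_eq_zero, rTensor_zero, LinearMap.zero_apply]

theorem lTensor_ker_injective_of_flat
    {F M : Type v} [AddCommGroup F] [Module R F]
    [AddCommGroup M] [Module R M] [Module.Flat R M]
    (f : F →ₗ[R] M) (hf : Function.Surjective f)
    (N : Type*) [AddCommGroup N] [Module R N] :
    Function.Injective ((LinearMap.ker f).subtype.lTensor N) :=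
  lTensor_injective_of_flat (Submodule.injective_subtype _) hf
    (LinearMap.exact_subtype_ker_map f)
    (Finsupp.linearCombination R _root_.id) (Finsupp.linearCombination_id_surjective R N)

/-- The kernel of a surjection from a flat module onto a flat module is flat. -/
theorem flat_ker_of_flat
    {F M : Type v} [AddCommGroup F] [Module R F] [Module.Flat R F]
    [AddCommGroup M] [Module R M] [Module.Flat R M]
    (f : F →ₗ[R] M) (hf : Function.Surjective f) :
    Module.Flat R (LinearMap.ker f) := by
  rw [Module.Flat.iff_rTensor_injective']
  intro J
  rw [injective_iff_map_eq_zero]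
  intro x hx
  set i := (LinearMap.ker f).subtype with hi
  have h1 : (i.lTensor R).comp ((J.subtype).rTensor (LinearMap.ker f))
      = ((J.subtype).rTensor F).comp (i.lTensor J) := by
    rw [rTensor_comp_lTensor, lTensor_comp_rTensor]
  have h2 : (J.subtype).rTensor F (i.lTensor J x) = 0 := by
    have := congrArg (fun g => g x) h1
    simp only [LinearMap.comp_apply] at this
    rw [← this, hx, map_zero]
  have h3 : i.lTensor J x = 0 :=
    (Module.Flat.iff_rTensor_injective' (R := R) (M := F)).mp inferInstance J h2
  exact lTensor_ker_injective_of_flat f hf J h3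

section smulHom

variable (J : Ideal R) {X Y : Type v} [AddCommGroup X] [Module R X]
  [AddCommGroup Y] [Module R Y]

/-- The multiplication map `J ⊗ X → X`. -/
noncomputable def smulHom : J ⊗[R] X →ₗ[R] X :=
  TensorProduct.lift ((LinearMap.lsmul R X).comp J.subtype)

@[simp] theorem smulHom_tmul (j : J) (x : X) : smulHom J (j ⊗ₜ[R] x) = (j : R) • x := rfl

theorem smulHom_eq_lid_comp :
    smulHom J (X := X) = (TensorProduct.lid R X).toLinearMap ∘ₗ (J.subtype).rTensor X := by
  apply TensorProduct.ext'
  intro j x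
  simp [smulHom]

theorem smulHom_injective [Module.Flat R X] : Function.Injective (smulHom J (X := X)) := by
  rw [smulHom_eq_lid_comp]
  exact ((TensorProduct.lid R X).injective).comp
    ((Module.Flat.iff_rTensor_injective' (R := R) (M := X)).mp inferInstance J)

theorem range_smulHom : LinearMap.range (smulHom J (X := X)) = J • (⊤ : Submodule R X) := by
  apply le_antisymm
  · rintro _ ⟨t, rfl⟩
    induction t with
    | zero => simp
    | tmul j x => exact Submodule.smul_mem_smul j.2 trivial
    | add s t hs ht => rw [map_add]; exact Submodule.add_mem _ hs ht
  · rw [Submodule.smul_le]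
    intro r hr x _
    exact ⟨⟨r, hr⟩ ⊗ₜ[R] x, rfl⟩

theorem smulHom_natural (g : X →ₗ[R] Y) :
    (smulHom J (X := Y)) ∘ₗ (g.lTensor J) = g ∘ₗ smulHom J (X := X) := by
  apply TensorProduct.ext'
  intro j x
  simp

end smulHom

/-- If `M` is flat and `f : F → M` is surjective, then `ker f ∩ J • F = J • ker f`. -/
theorem ker_inf_smul_le
    {F M : Type v} [AddCommGroup F] [Module R F]
    [AddCommGroup M] [Module R M] [Module.Flat R M]
    (f : F →ₗ[R] M) (hf : Function.Surjective f) (J : Ideal R) :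
    LinearMap.ker f ⊓ (J • ⊤ : Submodule R F) ≤ J • LinearMap.ker f := by
  rintro x ⟨hxk, hxs⟩
  have hx : x ∈ LinearMap.range (smulHom J (X := F)) := by rw [range_smulHom]; exact hxs
  obtain ⟨t, ht⟩ := hx
  have h1 : smulHom J (f.lTensor J t) = 0 := by
    have := congrArg (fun g => g t) (smulHom_natural J f)
    simp only [LinearMap.comp_apply] at this
    rw [this, ht]
    exact hxk
  have h2 : f.lTensor J t = 0 := by
    rw [← map_zero (smulHom J (X := M))] at h1
    exact smulHom_injective J h1
  obtain ⟨s, hs⟩ : t ∈ Set.range ((LinearMap.ker f).subtype.lTensor J) :=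
    (_root_.lTensor_exact J (LinearMap.exact_subtype_ker_map f) hf t).mp h2
  have h3 : x = (LinearMap.ker f).subtype (smulHom J s) := by
    have := congrArg (fun g => g s) (smulHom_natural J (LinearMap.ker f).subtype)
    simp only [LinearMap.comp_apply] at this
    rw [← ht, ← hs, this]
  rw [h3]
  have h4 : smulHom J s ∈ (J • ⊤ : Submodule R (LinearMap.ker f)) := by
    rw [← range_smulHom]; exact ⟨s, rfl⟩
  have h5 := Submodule.map_smul'' J (⊤ : Submodule R (LinearMap.ker f)) (LinearMap.ker f).subtype
  rw [Submodule.map_top, Submodule.range_subtype] at h5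
  rw [← h5]
  exact Submodule.mem_map_of_mem h4

section bridge

variable {A : Type u} [CommRing A]

theorem smul_eq_zero_of_algebraMap_eq_zero {R X : Type*} [CommRing R] [Algebra A R]
    [AddCommGroup X] [Module A X] [Module R X] [IsScalarTower A R X]
    {c : A} (hc : algebraMap A R c = 0) (x : X) : c • x = 0 := by
  rw [← algebraMap_smul R c x, hc, zero_smul]

theorem smul_restrictScalars_eq {R F : Type*} [CommRing R] [Algebra A R]
    [AddCommGroup F] [Module A F] [Module R F] [IsScalarTower A R F]
    (I : Ideal A) (N : Submodule R F) :
    I • N.restrictScalars A = (I.map (algebraMap A R) • N).restrictScalars A := by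
  apply le_antisymm
  · rw [Submodule.smul_le]
    intro a ha n hn
    show a • n ∈ (I.map (algebraMap A R) • N : Submodule R F)
    rw [← algebraMap_smul R a n]
    exact Submodule.smul_mem_smul (Ideal.mem_map_of_mem _ ha) hn
  · have key : ∀ r ∈ I.map (algebraMap A R), ∀ n ∈ N,
        r • n ∈ I • N.restrictScalars A := by
      intro r hr
      refine Submodule.span_induction
        (p := fun r _ => ∀ n ∈ N, r • n ∈ I • N.restrictScalars A) ?_ ?_ ?_ ?_ hr
      · rintro _ ⟨c, hc, rfl⟩ n hn
        rw [algebraMap_smul]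
        exact Submodule.smul_mem_smul hc hn
      · intro n _; rw [zero_smul]; exact Submodule.zero_mem _
      · intro r s _ _ hr hs n hn
        rw [add_smul]; exact Submodule.add_mem _ (hr n hn) (hs n hn)
      · intro c r _ hr n hn
        rw [smul_eq_mul, mul_comm, mul_smul]
        exact hr (c • n) (N.smul_mem c hn)
    intro x hx
    replace hx : x ∈ (I.map (algebraMap A R) • N : Submodule R F) := hx
    refine Submodule.smul_induction_on hx (fun r hr n hn => key r hr n hn)
      (fun x y hx' hy' => Submodule.add_mem _ hx' hy')

theorem smul_top_quotient (I J : Ideal A) :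
    (I • ⊤ : Submodule A (A ⧸ J)) = Submodule.map J.mkQ I := by
  apply le_antisymm
  · rw [Submodule.smul_le]
    intro c hc x _
    obtain ⟨b, rfl⟩ := J.mkQ_surjective x
    rw [← map_smul]
    exact Submodule.mem_map_of_mem (by simpa using I.mul_mem_right b hc)
  · rintro _ ⟨b, hb, rfl⟩
    have : J.mkQ b = b • J.mkQ 1 := by rw [← map_smul]; simp
    rw [this]
    exact Submodule.smul_mem_smul hb trivial

end bridge

section quotPow

variable {A : Type u} [CommRing A] (a : Ideal A) (k : ℕ)

theorem quotPowRed_mk (b : A) :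
    quotPowRed a k (Submodule.Quotient.mk b) = Submodule.Quotient.mk b :=
  Submodule.mapQ_apply _ _ _ b

theorem quotPowRed_surjective : Function.Surjective (quotPowRed a k) := by
  intro x
  obtain ⟨b, rfl⟩ := Submodule.mkQ_surjective _ x
  exact ⟨Submodule.Quotient.mk b, quotPowRed_mk a k b⟩

theorem ker_quotPowRed :
    LinearMap.ker (quotPowRed a k) = (a ^ (k + 1)) • (⊤ : Submodule A (A ⧸ a ^ (k + 2))) := by
  rw [smul_top_quotient]
  ext x
  constructor
  · intro hx
    obtain ⟨b, rfl⟩ := Submodule.mkQ_surjective _ x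
    rw [LinearMap.mem_ker, Submodule.mkQ_apply, quotPowRed_mk, Submodule.Quotient.mk_eq_zero] at hx
    exact ⟨b, hx, rfl⟩
  · rintro ⟨b, hb, rfl⟩
    rw [LinearMap.mem_ker, Submodule.mkQ_apply, quotPowRed_mk, Submodule.Quotient.mk_eq_zero]
    exact hb

theorem mk_pow_smul_eq_zero {X : Type*} [AddCommGroup X] [Module A X]
    [Module (A ⧸ a ^ (k + 1)) X] [IsScalarTower A (A ⧸ a ^ (k + 1)) X]
    {c : A} (hc : c ∈ a ^ (k + 1)) (x : X) : c • x = 0 :=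
  smul_eq_zero_of_algebraMap_eq_zero
    (by rw [Ideal.Quotient.algebraMap_eq, Ideal.Quotient.eq_zero_iff_mem (I := a ^ (k + 1))]; exact hc) x

theorem ker_mapRange (Z : Type*) :
    LinearMap.ker (Finsupp.mapRange.linearMap (α := Z) (quotPowRed a k))
      = (a ^ (k + 1)) • (⊤ : Submodule A (Z →₀ A ⧸ a ^ (k + 2))) := by
  apply le_antisymm
  · have key : ∀ f : Z →₀ A ⧸ a ^ (k + 2), (∀ z, f z ∈ LinearMap.ker (quotPowRed a k)) →
        f ∈ (a ^ (k + 1)) • (⊤ : Submodule A (Z →₀ A ⧸ a ^ (k + 2))) := by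
      intro f
      induction f using Finsupp.induction with
      | zero => intro _; exact Submodule.zero_mem _
      | single_add x b g hxg hb ih =>
        intro hv
        apply Submodule.add_mem
        · have hbk : b ∈ LinearMap.ker (quotPowRed a k) := by
            have := hv x
            rwa [Finsupp.add_apply, Finsupp.single_eq_same,
              Finsupp.notMem_support_iff.mp hxg, add_zero] at this
          rw [ker_quotPowRed] at hbk
          rw [smul_top_quotient] at hbk
          obtain ⟨c, hc, rfl⟩ := hbk
          have : Finsupp.single x ((a ^ (k + 2)).mkQ c) = c • Finsupp.single x
              ((a ^ (k + 2)).mkQ 1) := by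
            rw [Finsupp.smul_single, ← map_smul]
            simp
          rw [this]
          exact Submodule.smul_mem_smul hc trivial
        · apply ih
          intro z
          by_cases hz : z = x
          · subst hz
            rw [Finsupp.notMem_support_iff.mp hxg]
            exact Submodule.zero_mem _
          · have := hv z
            rwa [Finsupp.add_apply, Finsupp.single_eq_of_ne hz, zero_add] at this
    intro f hf
    apply key
    intro z
    rw [LinearMap.mem_ker] at hf ⊢
    have := congrArg (fun g => g z) hf
    simpa [Finsupp.mapRange_apply] using this
  · rw [Submodule.smul_le]
    intro c hc f _
    rw [LinearMap.mem_ker, map_smul]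
    exact mk_pow_smul_eq_zero a k hc _

end quotPow


structure AdicSys (A : Type u) [CommRing A] (a : Ideal A) : Type (u + 1) where
  M : ℕ → Type u
  [addcg : ∀ k, AddCommGroup (M k)]
  [modA : ∀ k, Module A (M k)]
  [modR : ∀ k, Module (A ⧸ a ^ (k + 1)) (M k)]
  [tower : ∀ k, IsScalarTower A (A ⧸ a ^ (k + 1)) (M k)]
  [flat : ∀ k, Module.Flat (A ⧸ a ^ (k + 1)) (M k)]
  ν : ∀ k, M (k + 1) →ₗ[A] M k
  hsurj : ∀ k, Function.Surjective (ν k)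
  hker : ∀ k, LinearMap.ker (ν k) = (a ^ (k + 1)) • (⊤ : Submodule A (M (k + 1)))

attribute [instance] AdicSys.addcg AdicSys.modA AdicSys.modR AdicSys.tower AdicSys.flat

namespace AdicSys

variable {A : Type u} [CommRing A] {a : Ideal A} (S : AdicSys A a)

/-- Iterated transition maps downward. -/
def down (j : ℕ) : (k : ℕ) → S.M k → S.M j
  | 0, m => if e : j = 0 then cast (congrArg S.M e.symm) m else 0
  | k + 1, m =>
    if e : j = k + 1 then cast (congrArg S.M e.symm) m else down j k (S.ν k m)

theorem down_self (j : ℕ) (m : S.M j) : S.down j j m = m := by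
  cases j with
  | zero => rw [down, dif_pos rfl, cast_eq]
  | succ j => rw [down, dif_pos rfl, cast_eq]

theorem down_succ {j k : ℕ} (h : j ≤ k) (m : S.M (k + 1)) :
    S.down j (k + 1) m = S.down j k (S.ν k m) := by
  rw [down, dif_neg (by omega)]

theorem nu_down {j : ℕ} : ∀ {k : ℕ}, j + 1 ≤ k → ∀ m : S.M k,
    S.ν j (S.down (j + 1) k m) = S.down j k m := by
  intro k
  induction k with
  | zero => omega
  | succ k ih =>
    intro h m
    by_cases hk : j + 1 = k + 1
    · obtain rfl : j = k := by omega
      rw [S.down_self (j + 1) m, S.down_succ (le_refl j) m, S.down_self j]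
    · have hjk : j + 1 ≤ k := by omega
      rw [S.down_succ (by omega) m, S.down_succ (by omega) m, ih hjk]

/-- A chosen section of `ν k`. -/
noncomputable def sec (k : ℕ) : S.M k → S.M (k + 1) := Function.surjInv (S.hsurj k)

theorem nu_sec (k : ℕ) (m : S.M k) : S.ν k (S.sec k m) = m :=
  Function.surjInv_eq (S.hsurj k) m

/-- Iterated upward lifts. -/
noncomputable def up (k : ℕ) (m : S.M k) : (n : ℕ) → S.M (k + n)
  | 0 => m
  | n + 1 => S.sec (k + n) (up k m n)

theorem up_succ (k : ℕ) (m : S.M k) (n : ℕ) :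
    S.up k m (n + 1) = S.sec (k + n) (S.up k m n) := by
  rw [up]

/-- The inverse limit (as a type of compatible sequences). -/
def Lim : Type u := {f : ∀ n, S.M n // ∀ n, S.ν n (f (n + 1)) = f n}

theorem lim_surj (k : ℕ) (m : S.M k) : ∃ z : S.Lim, z.1 k = m := by
  refine ⟨⟨fun n => S.down n (k + n) (S.up k m n), ?_⟩, ?_⟩
  · intro n
    show S.ν n (S.down (n + 1) (k + n + 1) (S.up k m (n + 1))) = _
    rw [S.nu_down (by omega) _, S.up_succ, S.down_succ (by omega), S.nu_sec]
  · show S.down k (k + k) (S.up k m k) = m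
    have key : ∀ n, S.down k (k + n) (S.up k m n) = m := by
      intro n
      induction n with
      | zero => exact S.down_self k m
      | succ n ih =>
        rw [S.up_succ]
        show S.down k ((k + n) + 1) (S.sec (k + n) (S.up k m n)) = m
        rw [S.down_succ (by omega), S.nu_sec, ih]
    exact key k

end AdicSys
namespace AdicSys

variable {A : Type u} [CommRing A] {a : Ideal A} (S : AdicSys A a)

/-- The `A_k`-linear evaluation map from the free module on the limit. -/
noncomputable def ehat (k : ℕ) : (S.Lim →₀ A ⧸ a ^ (k + 1)) →ₗ[A ⧸ a ^ (k + 1)] S.M k :=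
  Finsupp.linearCombination _ (fun z : S.Lim => z.1 k)

/-- The `A`-linear evaluation map. -/
noncomputable def eA (k : ℕ) : (S.Lim →₀ A ⧸ a ^ (k + 1)) →ₗ[A] S.M k :=
  (S.ehat k).restrictScalars A

theorem eA_apply (k : ℕ) (x) : S.eA k x = S.ehat k x := rfl

theorem ehat_surjective (k : ℕ) : Function.Surjective (S.ehat k) := by
  intro m
  obtain ⟨z, hz⟩ := S.lim_surj k m
  refine ⟨Finsupp.single z 1, ?_⟩
  rw [ehat, Finsupp.linearCombination_single, one_smul, hz]

theorem eA_surjective (k : ℕ) : Function.Surjective (S.eA k) := S.ehat_surjective k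

/-- The reduction map on free modules. -/
noncomputable def ρ (k : ℕ) :
    (S.Lim →₀ A ⧸ a ^ (k + 2)) →ₗ[A] (S.Lim →₀ A ⧸ a ^ (k + 1)) :=
  Finsupp.mapRange.linearMap (quotPowRed a k)

theorem ρ_surjective (k : ℕ) : Function.Surjective (S.ρ k) :=
  Finsupp.mapRange_surjective _ (map_zero _) (quotPowRed_surjective a k)

theorem ker_ρ (k : ℕ) :
    LinearMap.ker (S.ρ k) = (a ^ (k + 1)) • (⊤ : Submodule A (S.Lim →₀ A ⧸ a ^ (k + 2))) :=
  ker_mapRange a k S.Lim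

theorem eA_comm (k : ℕ) :
    (S.ν k) ∘ₗ S.eA (k + 1) = S.eA k ∘ₗ S.ρ k := by
  apply Finsupp.lhom_ext
  intro z c
  obtain ⟨x, rfl⟩ := Submodule.mkQ_surjective _ c
  have h1 : ∀ (j : ℕ) (m : S.M j) (y : A), ((a ^ (j + 1)).mkQ y) • m = y • m := by
    intro j m y
    rw [Submodule.mkQ_apply]
    show (Ideal.Quotient.mk _ y) • m = y • m
    rw [← Ideal.Quotient.algebraMap_eq, algebraMap_smul]
  show S.ν k (S.eA (k + 1) (Finsupp.single z ((a ^ (k + 2)).mkQ x)))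
      = S.eA k (S.ρ k (Finsupp.single z ((a ^ (k + 2)).mkQ x)))
  rw [eA_apply, ehat, Finsupp.linearCombination_single, h1, map_smul]
  rw [ρ, Finsupp.mapRange.linearMap_apply, Finsupp.mapRange_single, Submodule.mkQ_apply,
    quotPowRed_mk, eA_apply, ehat, Finsupp.linearCombination_single]
  rw [show Submodule.Quotient.mk x = (a ^ (k + 1)).mkQ x from rfl, h1]
  exact congrArg (x • ·) (z.2 k)

/-- The kernel of the evaluation map, as an `A_k`-submodule. -/
noncomputable def K (k : ℕ) : Submodule (A ⧸ a ^ (k + 1)) (S.Lim →₀ A ⧸ a ^ (k + 1)) :=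
  LinearMap.ker (S.ehat k)

theorem ker_eA (k : ℕ) : LinearMap.ker (S.eA k) = (S.K k).restrictScalars A := rfl

theorem mem_K_iff {k : ℕ} {x : S.Lim →₀ A ⧸ a ^ (k + 1)} :
    x ∈ (S.K k).restrictScalars A ↔ S.eA k x = 0 := by
  rw [← ker_eA, LinearMap.mem_ker]

theorem rho_mem_K {k : ℕ} : ∀ x ∈ (S.K (k + 1)).restrictScalars A,
    S.ρ k x ∈ (S.K k).restrictScalars A := by
  intro x hx
  rw [mem_K_iff] at hx ⊢
  have hc := congrArg (fun g => g x) (S.eA_comm k)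
  simp only [LinearMap.comp_apply] at hc
  rw [← hc, hx, map_zero]

/-- The induced transition map on kernels. -/
noncomputable def κ (k : ℕ) :
    ((S.K (k + 1)).restrictScalars A) →ₗ[A] ((S.K k).restrictScalars A) :=
  { toFun := fun x => ⟨S.ρ k x.1, S.rho_mem_K x.1 x.2⟩
    map_add' := fun x y => Subtype.ext (by simp)
    map_smul' := fun c x => Subtype.ext (by simp) }

theorem κ_surjective (k : ℕ) : Function.Surjective (S.κ k) := by
  intro y
  obtain ⟨x, hx⟩ := S.ρ_surjective k y.1
  have hy : S.eA k y.1 = 0 := S.mem_K_iff.mp y.2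
  have h1 : S.eA (k + 1) x ∈ LinearMap.ker (S.ν k) := by
    rw [LinearMap.mem_ker]
    have hc := congrArg (fun g => g x) (S.eA_comm k)
    simp only [LinearMap.comp_apply] at hc
    rw [hc, hx, hy]
  rw [S.hker k] at h1
  have h3 : (a ^ (k + 1)) • (⊤ : Submodule A (S.M (k + 1)))
      = Submodule.map (S.eA (k + 1)) ((a ^ (k + 1)) • ⊤) := by
    rw [Submodule.map_smul'', Submodule.map_top,
      LinearMap.range_eq_top.mpr (S.eA_surjective (k + 1))]
  rw [h3] at h1
  obtain ⟨c, hc, hcx⟩ := h1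
  have hxc : x - c ∈ (S.K (k + 1)).restrictScalars A := by
    rw [mem_K_iff, map_sub, hcx, sub_self]
  refine ⟨⟨x - c, hxc⟩, ?_⟩
  apply Subtype.ext
  show S.ρ k (x - c) = y.1
  have hc0 : S.ρ k c = 0 := by
    have : c ∈ LinearMap.ker (S.ρ k) := by rw [S.ker_ρ k]; exact hc
    rwa [LinearMap.mem_ker] at this
  rw [map_sub, hx, hc0, sub_zero]

theorem ker_κ (k : ℕ) : LinearMap.ker (S.κ k)
    = (a ^ (k + 1)) • (⊤ : Submodule A ((S.K (k + 1)).restrictScalars A)) := by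
  apply le_antisymm
  · intro v hv
    rw [LinearMap.mem_ker] at hv
    have hv1 : v.1 ∈ LinearMap.ker (S.ρ k) := by
      rw [LinearMap.mem_ker]
      exact congrArg Subtype.val hv
    rw [S.ker_ρ k] at hv1
    have htop : (a ^ (k + 1)) • (⊤ : Submodule A (S.Lim →₀ A ⧸ a ^ (k + 2)))
        = (((a ^ (k + 1)).map (algebraMap A (A ⧸ a ^ (k + 2)))
            • (⊤ : Submodule (A ⧸ a ^ (k + 2)) (S.Lim →₀ A ⧸ a ^ (k + 2)))).restrictScalars A) := by
      rw [← smul_restrictScalars_eq, Submodule.restrictScalars_top]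
    rw [htop] at hv1
    have h3 : v.1 ∈ ((a ^ (k + 1)).map (algebraMap A (A ⧸ a ^ (k + 2)))) • (S.K (k + 1)) := by
      apply ker_inf_smul_le (S.ehat (k + 1)) (S.ehat_surjective _)
      exact ⟨v.2, hv1⟩
    have h4 : v.1 ∈ (a ^ (k + 1)) • (S.K (k + 1)).restrictScalars A := by
      rw [smul_restrictScalars_eq]; exact h3
    have h5 := Submodule.map_smul'' (a ^ (k + 1))
      (⊤ : Submodule A ((S.K (k + 1)).restrictScalars A))
      ((S.K (k + 1)).restrictScalars A).subtype
    rw [Submodule.map_top, Submodule.range_subtype] at h5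
    rw [← h5] at h4
    obtain ⟨w, hw, hwv⟩ := h4
    have hweq : w = v := Subtype.ext hwv
    rwa [← hweq]
  · rw [Submodule.smul_le]
    intro c hc v _
    rw [LinearMap.mem_ker, map_smul]
    exact mk_pow_smul_eq_zero a k (X := ((S.K k).restrictScalars A)) hc (S.κ k v)

/-- The kernel system of a flat adic system: again a flat adic system. -/
noncomputable def next : AdicSys A a where
  M k := ((S.K k).restrictScalars A)
  addcg k := inferInstance
  modA k := inferInstance
  modR k := inferInstance
  tower k := inferInstance
  flat k := flat_ker_of_flat (S.ehat k) (S.ehat_surjective k)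
  ν := S.κ
  hsurj := S.κ_surjective
  hker := S.ker_κ

end AdicSys

namespace AdicSys

variable {A : Type u} [CommRing A] {a : Ideal A} (S : AdicSys A a)

/-- The boundary map associated to one step of the construction. -/
noncomputable def dmap (k : ℕ) :
    (S.next.Lim →₀ A ⧸ a ^ (k + 1)) →ₗ[A] (S.Lim →₀ A ⧸ a ^ (k + 1)) :=
  ((S.K k).restrictScalars A).subtype ∘ₗ S.next.eA k

theorem range_dmap (k : ℕ) : LinearMap.range (S.dmap k) = LinearMap.ker (S.eA k) := by
  ext x
  constructor
  · rintro ⟨y, rfl⟩; exact (S.next.eA k y).2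
  · intro hx
    obtain ⟨y, hy⟩ := S.next.eA_surjective k ⟨x, hx⟩
    exact ⟨y, congrArg Subtype.val hy⟩

theorem ker_dmap (k : ℕ) : LinearMap.ker (S.dmap k) = LinearMap.ker (S.next.eA k) := by
  ext x
  rw [LinearMap.mem_ker, LinearMap.mem_ker]
  exact ⟨fun h => Subtype.ext h, fun h => congrArg Subtype.val h⟩

theorem subtype_comp_κ (k : ℕ) :
    ((S.K k).restrictScalars A).subtype ∘ₗ S.κ k
      = S.ρ k ∘ₗ ((S.K (k + 1)).restrictScalars A).subtype := rfl

theorem dmap_comm (k : ℕ) :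
    S.ρ k ∘ₗ S.dmap (k + 1) = S.dmap k ∘ₗ S.next.ρ k := by
  have hν : S.next.ν k = S.κ k := rfl
  calc S.ρ k ∘ₗ (((S.K (k + 1)).restrictScalars A).subtype ∘ₗ S.next.eA (k + 1))
      = (S.ρ k ∘ₗ ((S.K (k + 1)).restrictScalars A).subtype) ∘ₗ S.next.eA (k + 1) := by
        rfl
    _ = (((S.K k).restrictScalars A).subtype ∘ₗ S.κ k) ∘ₗ S.next.eA (k + 1) := by
        rw [subtype_comp_κ]
    _ = ((S.K k).restrictScalars A).subtype ∘ₗ (S.κ k ∘ₗ S.next.eA (k + 1)) := by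
        rfl
    _ = ((S.K k).restrictScalars A).subtype ∘ₗ (S.next.eA k ∘ₗ S.next.ρ k) := by
        exact congrArg (LinearMap.comp ((S.K k).restrictScalars A).subtype) (S.next.eA_comm k)
    _ = (((S.K k).restrictScalars A).subtype ∘ₗ S.next.eA k) ∘ₗ S.next.ρ k := by
        rfl

/-- Iterating the kernel-system construction. -/
noncomputable def iter (S0 : AdicSys A a) : ℕ → AdicSys A a
  | 0 => S0
  | n + 1 => (iter S0 n).next

end AdicSys

/-- Every flat `𝔞`-adic system admits a free resolution: if `{M_k}` is an `𝔞`-adic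
system in which each `M_k` is a flat `A_k = A/𝔞^{k+1}`-module, then there exist free
`A_k`-module resolutions of the `M_k` with common basis sets `Z i`, compatible under
the reduction maps `A_{k+1} → A_k`. -/
theorem free_resolution_of_flat_adic_system {A : Type u} [CommRing A]
    (a : Ideal A)
    (M : ℕ → Type u) [∀ k, AddCommGroup (M k)] [∀ k, Module A (M k)]
    [∀ k, Module (A ⧸ a ^ (k + 1)) (M k)]
    [∀ k, IsScalarTower A (A ⧸ a ^ (k + 1)) (M k)]
    [∀ k, Module.Flat (A ⧸ a ^ (k + 1)) (M k)]
    (ν : ∀ k, M (k + 1) →ₗ[A] M k)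
    (hsurj : ∀ k, Function.Surjective (ν k))
    (hker : ∀ k, LinearMap.ker (ν k) = (a ^ (k + 1)) • (⊤ : Submodule A (M (k + 1)))) :
    ∃ (Z : ℕ → Type u)
      (d : ∀ (k i : ℕ), (Z (i + 1) →₀ (A ⧸ a ^ (k + 1))) →ₗ[A] (Z i →₀ (A ⧸ a ^ (k + 1))))
      (e : ∀ k : ℕ, (Z 0 →₀ (A ⧸ a ^ (k + 1))) →ₗ[A] M k),
      (∀ k, Function.Surjective (e k)) ∧
      (∀ k, LinearMap.ker (e k) = LinearMap.range (d k 0)) ∧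
      (∀ k i, LinearMap.ker (d k i) = LinearMap.range (d k (i + 1))) ∧
      (∀ k i, (Finsupp.mapRange.linearMap (quotPowRed a k)) ∘ₗ d (k + 1) i =
        d k i ∘ₗ (Finsupp.mapRange.linearMap (quotPowRed a k))) ∧
      (∀ k, (ν k) ∘ₗ e (k + 1) = e k ∘ₗ (Finsupp.mapRange.linearMap (quotPowRed a k))) := by
  classical
  set S0 : AdicSys A a := { M := M, ν := ν, hsurj := hsurj, hker := hker } with hS0
  refine ⟨fun i => (AdicSys.iter S0 i).Lim,
    fun k i => (AdicSys.iter S0 i).dmap k,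
    fun k => S0.eA k, ?_, ?_, ?_, ?_, ?_⟩
  · exact fun k => S0.eA_surjective k
  · exact fun k => ((AdicSys.iter S0 0).range_dmap k).symm
  · exact fun k i => ((AdicSys.iter S0 i).ker_dmap k).trans
      ((AdicSys.iter S0 (i + 1)).range_dmap k).symm
  · exact fun k i => (AdicSys.iter S0 i).dmap_comm k
  · exact fun k => S0.eA_comm k
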